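/- Let n, d be integers with d ≥ 2, let ε ∈ (0, d], and set m = ⌊εn/d⌋; assume m ≥ 1. If A ∈ ℝ^{n×n} with ‖A‖_∞ ≤ 1 is ε/d-far from stable rank at most d, then ‖A‖_F² > (d−1)·m·n; in particular ‖A‖_F² > εn²(1 − 1/d) − (d−1)n. -/

import Mathlib

open Matrix Finset
open scoped Classical

/-- The squared Frobenius norm `‖A‖_F²` of a real matrix. -/
noncomputable def frobSq {n : ℕ} (A : Matrix (Fin n) (Fin n) ℝ) : ℝ :=
  ∑ i, ∑ j, (A i j) ^ 2

/-- The operator norm (largest singular value) of a real matrix, viewed as a linear map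
`ℓ²ⁿ → ℓ²ⁿ`. -/
noncomputable def opNorm {n : ℕ} (A : Matrix (Fin n) (Fin n) ℝ) : ℝ :=
  ‖LinearMap.toContinuousLinearMap (Matrix.toEuclideanLin A)‖

/-- The stable rank `srank(A) = ‖A‖_F²/‖A‖²`. -/
noncomputable def stableRank {n : ℕ} (A : Matrix (Fin n) (Fin n) ℝ) : ℝ :=
  frobSq A / (opNorm A) ^ 2

lemma card_filter_val_lt (n m : ℕ) (h : m ≤ n) :
    (Finset.univ.filter fun i : Fin n => (i : ℕ) < m).card = m := by
  classical
  calc (Finset.univ.filter fun i : Fin n => (i : ℕ) < m).card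
      = ∑ i : Fin n, if (i : ℕ) < m then 1 else 0 := by
        rw [Finset.card_filter]
    _ = ∑ i ∈ Finset.range n, if i < m then 1 else 0 :=
        Fin.sum_univ_eq_sum_range (fun i => if i < m then (1:ℕ) else 0) n
    _ = ((Finset.range n).filter fun i => i < m).card := by
        rw [Finset.card_filter]
    _ = m := by
        have : (Finset.range n).filter (fun i => i < m) = Finset.range m := by
          ext i; simp only [Finset.mem_filter, Finset.mem_range]; omega
        rw [this, Finset.card_range]

theorem stmt9 {n d : ℕ} (hd : 2 ≤ d) {ε : ℝ} (hε0 : 0 < ε) (hεd : ε ≤ (d : ℝ))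
    (hm : 1 ≤ ⌊ε * (n : ℝ) / (d : ℝ)⌋₊)
    (A : Matrix (Fin n) (Fin n) ℝ) (hAinf : ∀ i j, |A i j| ≤ 1)
    (hfar : ∀ B : Matrix (Fin n) (Fin n) ℝ, B ≠ 0 → (∀ i j, |B i j| ≤ 1) →
      ((Finset.univ.filter fun p : Fin n × Fin n => A p.1 p.2 ≠ B p.1 p.2).card : ℝ)
        ≤ ε * (n : ℝ) ^ 2 / (d : ℝ) →
      (d : ℝ) < stableRank B) :
    ((d : ℝ) - 1) * (⌊ε * (n : ℝ) / (d : ℝ)⌋₊ : ℝ) * (n : ℝ) < frobSq A ∧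
      ε * (n : ℝ) ^ 2 * (1 - 1 / (d : ℝ)) - ((d : ℝ) - 1) * (n : ℝ) < frobSq A := by
  classical
  set m := ⌊ε * (n : ℝ) / (d : ℝ)⌋₊ with hmdef
  have hd0 : (0 : ℝ) < d := by
    have : (0 : ℕ) < d := by omega
    exact_mod_cast this
  have hn0 : 0 < n := by
    by_contra h
    push_neg at h
    interval_cases n
    simp [hmdef] at hm
  have hnR : (0 : ℝ) < n := by exact_mod_cast hn0
  -- m ≤ ε n / d
  have hmle : (m : ℝ) ≤ ε * n / d := Nat.floor_le (by positivity)
  have hmge : ε * n / d - 1 < (m : ℝ) := Nat.sub_one_lt_floor _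
  have hmn : m ≤ n := by
    have : (m : ℝ) ≤ (n : ℝ) := by
      calc (m : ℝ) ≤ ε * n / d := hmle
        _ ≤ d * n / d := by
            apply div_le_div_of_nonneg_right _ hd0.le
            exact mul_le_mul_of_nonneg_right hεd hnR.le
        _ = n := by field_simp
    exact_mod_cast this
  have hm1 : 1 ≤ m := hm
  have hmR : (1 : ℝ) ≤ (m : ℝ) := by exact_mod_cast hm1
  have hmnpos : (0 : ℝ) < (m : ℝ) * n := by positivity
  have key : ((d : ℝ) - 1) * (m : ℝ) * (n : ℝ) < frobSq A := by
    by_contra hle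
    push_neg at hle
    -- build B by setting the first m rows to all ones
    set B : Matrix (Fin n) (Fin n) ℝ :=
      fun i j => if (i : ℕ) < m then 1 else A i j with hBdef
    have hB0 : B ≠ 0 := by
      intro h
      have h0 : B ⟨0, hn0⟩ ⟨0, hn0⟩ = 0 := by rw [h]; rfl
      rw [hBdef] at h0
      simp only [if_pos (show (0 : ℕ) < m by omega)] at h0
      exact one_ne_zero h0
    have hBinf : ∀ i j, |B i j| ≤ 1 := by
      intro i j
      rw [hBdef]
      by_cases h : (i : ℕ) < m
      · simp [h]
      · simpa [h] using hAinf i j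
    have hcard : ((Finset.univ.filter fun p : Fin n × Fin n =>
        A p.1 p.2 ≠ B p.1 p.2).card : ℝ) ≤ ε * (n : ℝ) ^ 2 / (d : ℝ) := by
      have hsub : (Finset.univ.filter fun p : Fin n × Fin n => A p.1 p.2 ≠ B p.1 p.2)
          ⊆ (Finset.univ.filter fun i : Fin n => (i : ℕ) < m) ×ˢ Finset.univ := by
        intro p hp
        simp only [Finset.mem_filter, Finset.mem_univ, true_and] at hp
        simp only [Finset.mem_product, Finset.mem_filter, Finset.mem_univ, true_and,
          and_true]
        by_contra h
        exact hp (by rw [hBdef]; simp [h])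
      have hcard2 : ((Finset.univ.filter fun i : Fin n => (i : ℕ) < m) ×ˢ
          (Finset.univ : Finset (Fin n))).card = m * n := by
        rw [Finset.card_product, card_filter_val_lt n m hmn, Finset.card_univ,
          Fintype.card_fin]
      calc ((Finset.univ.filter fun p : Fin n × Fin n => A p.1 p.2 ≠ B p.1 p.2).card : ℝ)
          ≤ ((m * n : ℕ) : ℝ) := by
            exact_mod_cast le_trans (Finset.card_le_card hsub) (le_of_eq hcard2)
        _ = (m : ℝ) * n := by push_cast; ring
        _ ≤ ε * n / d * n := mul_le_mul_of_nonneg_right hmle hnR.le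
        _ = ε * (n : ℝ) ^ 2 / d := by ring
    -- opNorm lower bound
    have hop : (m : ℝ) * n ≤ (opNorm B) ^ 2 := by
      set x : EuclideanSpace ℝ (Fin n) := (WithLp.equiv 2 _).symm (fun _ => (1 : ℝ))
        with hxdef
      have hxnorm : ‖x‖ = Real.sqrt n := by
        rw [EuclideanSpace.norm_eq]
        simp [hxdef]
      set T := LinearMap.toContinuousLinearMap (Matrix.toEuclideanLin B) with hTdef
      have hTx : T x = (WithLp.equiv 2 (Fin n → ℝ)).symm (B *ᵥ fun _ => 1) := by
        rw [hTdef, hxdef]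
        simp [Matrix.toEuclideanLin_apply_piLp_toLp]
      have hTxnorm : Real.sqrt ((m : ℝ) * n ^ 2) ≤ ‖T x‖ := by
        rw [hTx, EuclideanSpace.norm_eq]
        apply Real.sqrt_le_sqrt
        have : (m : ℝ) * (n : ℝ) ^ 2 =
            ∑ i ∈ Finset.univ.filter fun i : Fin n => (i : ℕ) < m, (n : ℝ) ^ 2 := by
          rw [Finset.sum_const, card_filter_val_lt n m hmn, nsmul_eq_mul]
        rw [this]
        have hterm : ∀ i ∈ Finset.univ.filter fun i : Fin n => (i : ℕ) < m,
            (n : ℝ) ^ 2 ≤ ‖((WithLp.equiv 2 (Fin n → ℝ)).symm (B *ᵥ fun _ => 1)) i‖ ^ 2 := by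
          intro i hi
          simp only [Finset.mem_filter] at hi
          have : ((WithLp.equiv 2 (Fin n → ℝ)).symm (B *ᵥ fun _ => 1)) i
              = (B *ᵥ fun _ => 1) i := rfl
          rw [this]
          have : (B *ᵥ fun _ => (1:ℝ)) i = (n : ℝ) := by
            simp only [Matrix.mulVec, dotProduct, mul_one, hBdef]
            simp [hi.2]
          rw [this]
          rw [Real.norm_eq_abs, sq_abs]
        calc (∑ i ∈ Finset.univ.filter fun i : Fin n => (i : ℕ) < m, (n : ℝ) ^ 2)
            ≤ ∑ i ∈ Finset.univ.filter fun i : Fin n => (i : ℕ) < m,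
              ‖((WithLp.equiv 2 (Fin n → ℝ)).symm (B *ᵥ fun _ => 1)) i‖ ^ 2 :=
              Finset.sum_le_sum hterm
          _ ≤ ∑ i, ‖((WithLp.equiv 2 (Fin n → ℝ)).symm (B *ᵥ fun _ => 1)) i‖ ^ 2 := by
              apply Finset.sum_le_sum_of_subset_of_nonneg (Finset.filter_subset _ _)
              intro i _ _
              positivity
      have hTnorm : ‖T x‖ ≤ ‖T‖ * ‖x‖ := T.le_opNorm x
      have h1 : Real.sqrt ((m : ℝ) * n ^ 2) ≤ ‖T‖ * Real.sqrt n := by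
        rw [← hxnorm]; exact le_trans hTxnorm hTnorm
      have h2 : Real.sqrt ((m : ℝ) * n ^ 2) = Real.sqrt ((m : ℝ) * n) * Real.sqrt n := by
        rw [← Real.sqrt_mul (by positivity)]
        ring_nf
      have h3 : Real.sqrt ((m : ℝ) * n) ≤ ‖T‖ := by
        have hsn : (0 : ℝ) < Real.sqrt n := Real.sqrt_pos.mpr hnR
        rw [h2] at h1
        exact le_of_mul_le_mul_right h1 hsn
      have h4 : (m : ℝ) * n ≤ ‖T‖ ^ 2 := by
        have := mul_le_mul h3 h3 (Real.sqrt_nonneg _) (norm_nonneg _)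
        rwa [Real.mul_self_sqrt hmnpos.le, ← sq] at this
      have hTeq : opNorm B = ‖T‖ := rfl
      rw [hTeq]
      exact h4
    -- frobSq upper bound
    have hfrob : frobSq B ≤ (m : ℝ) * n + frobSq A := by
      have hpt : ∀ i j, (B i j) ^ 2 ≤ (if (i : ℕ) < m then (1:ℝ) else 0) + (A i j) ^ 2 := by
        intro i j
        rw [hBdef]
        by_cases h : (i : ℕ) < m
        · simp only [if_pos h]
          nlinarith [sq_nonneg (A i j)]
        · simp only [if_neg h]
          nlinarith
      calc frobSq B ≤ ∑ i : Fin n, ∑ j : Fin n, ((if (i : ℕ) < m then (1:ℝ) else 0) + (A i j) ^ 2) := by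
            apply Finset.sum_le_sum
            intro i _
            exact Finset.sum_le_sum fun j _ => hpt i j
        _ = (∑ i : Fin n, ∑ _j : Fin n, (if (i : ℕ) < m then (1:ℝ) else 0)) + frobSq A := by
            simp only [frobSq, Finset.sum_add_distrib]
        _ = (m : ℝ) * n + frobSq A := by
            congr 1
            simp only [Finset.sum_const, Finset.card_univ, Fintype.card_fin, nsmul_eq_mul]
            rw [← Finset.mul_sum, Finset.sum_boole, card_filter_val_lt n m hmn]
            ring
    have hsr := hfar B hB0 hBinf hcard
    -- derive contradiction : stableRank B ≤ d
    have hfb0 : 0 ≤ frobSq B := Finset.sum_nonneg fun i _ =>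
      Finset.sum_nonneg fun j _ => sq_nonneg _
    have hople : stableRank B ≤ frobSq B / ((m : ℝ) * n) := by
      rw [stableRank]
      exact div_le_div_of_nonneg_left hfb0 hmnpos hop
    have : stableRank B ≤ (d : ℝ) := by
      calc stableRank B ≤ frobSq B / ((m : ℝ) * n) := hople
        _ ≤ ((m : ℝ) * n + ((d : ℝ) - 1) * m * n) / ((m : ℝ) * n) := by
            apply div_le_div_of_nonneg_right _ hmnpos.le
            linarith [hfrob, hle]
        _ = (d : ℝ) := by
            field_simp
            ring
    linarith
  refine ⟨key, lt_of_le_of_lt ?_ key⟩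
  have h2d : (2 : ℝ) ≤ (d : ℝ) := by exact_mod_cast hd
  have hd1 : (0 : ℝ) ≤ (d : ℝ) - 1 := by linarith
  have h5 : ε * n - d < (m : ℝ) * d := by
    have := hmge
    have h := (div_lt_iff₀ hd0).mp (by linarith : ε * n / d < (m : ℝ) + 1)
    linarith
  rw [← mul_le_mul_iff_of_pos_right hd0]
  have hid : (ε * (n : ℝ) ^ 2 * (1 - 1 / d) - ((d : ℝ) - 1) * n) * d
      = ε * (n : ℝ) ^ 2 * ((d : ℝ) - 1) - ((d : ℝ) - 1) * n * d := by
    field_simp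
  rw [hid]
  nlinarith [mul_le_mul_of_nonneg_right h5.le (mul_nonneg hd1 hnR.le)]
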